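/- For every real number x, the exponential generating function of the central Fubini-like polynomials satisfies, as an identity of formal power series in ℝ[[t]]: (1 − 2x·S(t)) · ∑_{n≥0} 𝔠_n(x)·t^n/n! = 1, where S(t) := ∑_{m≥0} t^{2m+1}/(2^{2m+1}·(2m+1)!) is the formal power series of sinh(t/2); i.e., ∑_{n≥0} 𝔠_n(x)·t^n/n! = 1/(1 − 2x·sinh(t/2)). -/

import Mathlib

open Nat Finset

/-- Central factorial numbers of the second kind. -/
noncomputable def centralT (n k : ℕ) : ℝ :=
  (1 / (k ! : ℝ)) * ∑ j ∈ Finset.range (k + 1),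
    (-1 : ℝ) ^ j * (k.choose j : ℝ) * ((k : ℝ) / 2 - (j : ℝ)) ^ n

/-- Central Fubini-like polynomials. -/
noncomputable def centralFubini (n : ℕ) (x : ℝ) : ℝ :=
  ∑ k ∈ Finset.range (n + 1), (k ! : ℝ) * centralT n k * x ^ k

/-- Formal power series of `sinh (t/2)`:  `∑_{m≥0} t^(2m+1)/(2^(2m+1)·(2m+1)!)`. -/
noncomputable def sinhHalf : PowerSeries ℝ :=
  PowerSeries.mk fun m => if m % 2 = 1 then 1 / (2 ^ m * (m ! : ℝ)) else 0

open PowerSeries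

lemma E_pow (a : ℝ) (m : ℕ) :
    (rescale a (exp ℝ)) ^ m = rescale ((m : ℝ) * a) (exp ℝ) := by
  induction m with
  | zero =>
      simp [rescale_zero]
  | succ m ih =>
      rw [pow_succ, ih, exp_mul_exp_eq_exp_add]
      push_cast
      ring_nf

lemma coeff_E (a : ℝ) (n : ℕ) : PowerSeries.coeff n (rescale a (exp ℝ)) = a ^ n / n ! := by
  rw [coeff_rescale, coeff_exp]
  simp [div_eq_mul_inv]

lemma two_sinhHalf :
    PowerSeries.C 2 * sinhHalf
      = rescale (1/2) (exp ℝ) - rescale (-(1/2)) (exp ℝ) := by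
  ext n
  rw [coeff_C_mul, map_sub, coeff_E, coeff_E, sinhHalf, coeff_mk]
  rcases Nat.even_or_odd n with he | ho
  · rw [he.neg_pow]
    have : n % 2 = 0 := Nat.even_iff.mp he
    simp [this]
  · rw [ho.neg_pow]
    have : n % 2 = 1 := Nat.odd_iff.mp ho
    rw [if_pos this]
    have : ((1:ℝ)/2) ^ n = 1 / 2 ^ n := by
      rw [div_pow, one_pow]
    rw [this]
    have h2 : (2:ℝ)^n ≠ 0 := by positivity
    have hf : ((n ! : ℝ)) ≠ 0 := by positivity
    field_simp
    ring

lemma coeff_u_pow (x : ℝ) (q k : ℕ) :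
    PowerSeries.coeff q ((PowerSeries.C (2*x) * sinhHalf) ^ k)
      = x ^ k * ((k ! : ℝ) * centralT q k) / q ! := by
  have h1 : PowerSeries.C (2*x) * sinhHalf
      = PowerSeries.C x * (rescale (1/2) (exp ℝ) - rescale (-(1/2)) (exp ℝ)) := by
    rw [← two_sinhHalf, ← mul_assoc, ← map_mul]
    ring_nf
  rw [h1, mul_pow, ← map_pow, sub_pow]
  rw [coeff_C_mul, map_sum]
  have hterm : ∀ m ∈ range (k+1),
      PowerSeries.coeff q ((-1:ℝ⟦X⟧) ^ (m + k) * rescale (1/2) (exp ℝ) ^ m *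
          rescale (-(1/2)) (exp ℝ) ^ (k - m) * (k.choose m : ℝ⟦X⟧))
        = (-1:ℝ) ^ (m + k) * (k.choose m : ℝ) * ((m : ℝ) - (k:ℝ)/2) ^ q / q ! := by
    intro m hm
    rw [mem_range] at hm
    have hmk : m ≤ k := by omega
    rw [E_pow, E_pow]
    have harg : (m : ℝ) * (1/2) + ((k - m : ℕ) : ℝ) * (-(1/2)) = (m : ℝ) - (k:ℝ)/2 := by
      rw [Nat.cast_sub hmk]; ring
    have hc : ((-1:ℝ⟦X⟧) ^ (m + k) * rescale ((m:ℝ)*(1/2)) (exp ℝ) *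
          rescale (((k-m:ℕ):ℝ)*(-(1/2))) (exp ℝ) * (k.choose m : ℝ⟦X⟧))
        = PowerSeries.C ((-1:ℝ) ^ (m+k) * (k.choose m : ℝ)) *
          (rescale ((m:ℝ)*(1/2)) (exp ℝ) * rescale (((k-m:ℕ):ℝ)*(-(1/2))) (exp ℝ)) := by
      rw [map_mul, map_pow, map_neg, map_one, map_natCast]
      ring
    rw [hc, exp_mul_exp_eq_exp_add, harg, coeff_C_mul, coeff_E]
    ring
  rw [Finset.sum_congr rfl hterm]
  have hT : (k ! : ℝ) * centralT q k
      = ∑ j ∈ range (k+1), (-1:ℝ)^j * (k.choose j : ℝ) * ((k:ℝ)/2 - (j:ℝ))^q := by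
    rw [centralT, ← mul_assoc, mul_one_div, div_self (by positivity : (k ! : ℝ) ≠ 0), one_mul]
  set f : ℕ → ℝ := fun j => x ^ k * ((-1 : ℝ) ^ j * (k.choose j : ℝ) * (((k : ℝ) / 2 - (j : ℝ)) ^ q / q !)) with hf
  have goalR : x ^ k * ((k ! : ℝ) * centralT q k) / q ! = ∑ j ∈ range (k+1), f j := by
    rw [hT, mul_div_assoc, Finset.sum_div, Finset.mul_sum]
    exact Finset.sum_congr rfl fun j _ => by rw [hf]; ring
  rw [Finset.mul_sum]
  refine Eq.trans (Finset.sum_congr rfl fun m hm => ?_)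
    ((Finset.sum_range_reflect f (k+1)).trans goalR.symm)
  rw [mem_range] at hm
  have hmk : m ≤ k := by omega
  have h1 : k + 1 - 1 - m = k - m := by omega
  rw [hf, h1]
  have h2 : ((k:ℝ)/2 - ((k - m : ℕ) : ℝ)) = (m:ℝ) - (k:ℝ)/2 := by
    rw [Nat.cast_sub hmk]; ring
  have h3 : k.choose (k - m) = k.choose m := Nat.choose_symm hmk
  have h4 : (-1:ℝ)^(k-m) = (-1)^(m+k) := by
    rw [show m + k = (k - m) + 2*m by omega, pow_add, pow_mul]
    simp
  simp only [h2, h3, h4]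
  ring

theorem central_fubini_poly_egf (x : ℝ) :
    (1 - PowerSeries.C (2 * x) * sinhHalf) *
      PowerSeries.mk (fun n => centralFubini n x / (n ! : ℝ)) = 1 := by
  set u : ℝ⟦X⟧ := PowerSeries.C (2 * x) * sinhHalf with hu
  have hu0 : PowerSeries.constantCoeff u = 0 := by
    simp [hu, sinhHalf, PowerSeries.constantCoeff_mk]
  have hpow : ∀ q k : ℕ, q < k → PowerSeries.coeff q (u ^ k) = 0 := by
    intro q k hqk
    have hX : (X : ℝ⟦X⟧) ∣ u := X_dvd_iff.mpr hu0
    exact (X_pow_dvd_iff.mp (pow_dvd_pow_of_dvd hX k)) q hqk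
  have hF : ∀ n q : ℕ, q ≤ n →
      PowerSeries.coeff q (PowerSeries.mk fun n => centralFubini n x / (n ! : ℝ))
        = PowerSeries.coeff q (∑ k ∈ range (n + 1), u ^ k) := by
    intro n q hqn
    rw [coeff_mk, map_sum]
    have hsub : ∑ k ∈ range (q + 1), PowerSeries.coeff q (u ^ k)
        = ∑ k ∈ range (n + 1), PowerSeries.coeff q (u ^ k) := by
      apply Finset.sum_subset (Finset.range_subset_range.mpr (by omega))
      intro k hk hk2
      simp only [Finset.mem_range] at hk2
      exact hpow q k (by omega)
    rw [← hsub, centralFubini, Finset.sum_div]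
    refine Finset.sum_congr rfl fun k _ => ?_
    rw [hu, coeff_u_pow]
    ring
  ext n
  rw [PowerSeries.coeff_mul,
    Finset.sum_congr rfl (fun p hp => by
      rw [hF n p.2 (by
        rw [Finset.HasAntidiagonal.mem_antidiagonal] at hp
        omega)]),
    ← PowerSeries.coeff_mul]
  have hgeo : (1 - u) * ∑ k ∈ range (n + 1), u ^ k = 1 - u ^ (n + 1) := by
    linear_combination -geom_sum_mul u (n + 1)
  rw [hgeo, map_sub, hpow n (n + 1) (by omega)]
  simp
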